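/- Let F = F_{0,0}. Then (0, 0) is a fixed point of F and F^5(x, y) = (0, 0) for every (x, y) ∈ ℝ². More precisely: (i) if y < 0 then F^4(x, y) = (0, 0); (ii) for every x > 0, F^2(x, 0) = (0, 0); (iii) for every x > 0, F^4(−x, 0) = (0, 0). -/
import Mathlib


/-- The piecewise linear map `F_{a,b}(x,y) = (|x| - y + a, x - |y| + b)`. -/
noncomputable def F (a b : ℝ) : ℝ × ℝ → ℝ × ℝ :=
  fun p => (|p.1| - p.2 + a, p.1 - |p.2| + b)

lemma Fzero : F 0 0 (0, 0) = (0, 0) := by simp [F]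

lemma Fapp (x y : ℝ) : F 0 0 (x, y) = (|x| - y, x - |y|) := by simp [F]

lemma lemA (x y : ℝ) (hy : 0 ≤ y) (hxy : y ≤ x) : (F 0 0)^[2] (x, y) = (0, 0) := by
  have hx : 0 ≤ x := hy.trans hxy
  have h1 : F 0 0 (x, y) = (x - y, x - y) := by
    rw [Fapp, abs_of_nonneg hx, abs_of_nonneg hy]
  have h2 : F 0 0 (x - y, x - y) = (0, 0) := by
    rw [Fapp, abs_of_nonneg (sub_nonneg.2 hxy)]; ring_nf
  show F 0 0 (F 0 0 (x, y)) = (0, 0)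
  rw [h1, h2]

lemma lemB (x y : ℝ) (hy : y < 0) : (F 0 0)^[4] (x, y) = (0, 0) := by
  have h1 : F 0 0 (x, y) = (|x| - y, x + y) := by
    rw [Fapp, abs_of_neg hy]; ring_nf
  have hu : 0 < |x| - y := by have := abs_nonneg x; linarith
  show F 0 0 (F 0 0 (F 0 0 (F 0 0 (x, y)))) = (0, 0)
  rw [h1]
  rcases le_or_gt 0 (x + y) with hv | hv
  · -- 0 ≤ x + y ≤ |x| - y, so two more steps reach 0
    have hle : x + y ≤ |x| - y := by
      have := le_abs_self x; linarith
    have := lemA (|x| - y) (x + y) hv hle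
    have h2 : F 0 0 (F 0 0 (|x| - y, x + y)) = (0, 0) := this
    rw [h2, Fzero]
  · have h2 : F 0 0 (|x| - y, x + y) = (|x| - y - (x + y), |x| + x) := by
      rw [Fapp, abs_of_pos hu, abs_of_neg hv]; ring_nf
    have hw2 : 0 ≤ |x| + x := by have := neg_abs_le x; linarith
    have hle : |x| + x ≤ |x| - y - (x + y) := by linarith
    have := lemA (|x| - y - (x + y)) (|x| + x) hw2 hle
    have h3 : F 0 0 (F 0 0 (|x| - y - (x + y), |x| + x)) = (0, 0) := this
    rw [h2, h3]

lemma lem5 (x y : ℝ) : (F 0 0)^[5] (x, y) = (0, 0) := by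
  rcases lt_or_ge y 0 with hy | hy
  · have := lemB x y hy
    have h : (F 0 0)^[5] (x, y) = F 0 0 ((F 0 0)^[4] (x, y)) :=
      Function.iterate_succ_apply' (F 0 0) 4 (x, y)
    rw [h, this, Fzero]
  · rcases lt_or_ge x y with hxy | hxy
    · -- x - y < 0, so after one step the second coordinate is negative
      have h1 : F 0 0 (x, y) = (|x| - y, x - y) := by rw [Fapp, abs_of_nonneg hy]
      have h2 : (F 0 0)^[4] (|x| - y, x - y) = (0, 0) := lemB _ _ (by linarith)
      have h : (F 0 0)^[5] (x, y) = (F 0 0)^[4] (F 0 0 (x, y)) :=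
        Function.iterate_succ_apply (F 0 0) 4 (x, y)
      rw [h, h1, h2]
    · -- 0 ≤ y ≤ x
      have h2 : (F 0 0)^[2] (x, y) = (0, 0) := lemA x y hy hxy
      have h3 : (F 0 0)^[3] (x, y) = (0, 0) := by
        have : (F 0 0)^[3] (x, y) = F 0 0 ((F 0 0)^[2] (x, y)) :=
          Function.iterate_succ_apply' (F 0 0) 2 (x, y)
        rw [this, h2, Fzero]
      have h4 : (F 0 0)^[4] (x, y) = (0, 0) := by
        have : (F 0 0)^[4] (x, y) = F 0 0 ((F 0 0)^[3] (x, y)) :=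
          Function.iterate_succ_apply' (F 0 0) 3 (x, y)
        rw [this, h3, Fzero]
      have : (F 0 0)^[5] (x, y) = F 0 0 ((F 0 0)^[4] (x, y)) :=
        Function.iterate_succ_apply' (F 0 0) 4 (x, y)
      rw [this, h4, Fzero]

/-- For `F = F_{0,0}`: `(0,0)` is a fixed point and `F^[5] x = (0,0)` for every `x`;
more precisely, (i) if `y < 0` then `F^[4] (x,y) = (0,0)`, (ii) for `x > 0`,
`F^[2] (x,0) = (0,0)`, and (iii) for `x > 0`, `F^[4] (-x,0) = (0,0)`. -/
theorem case_a_zero_b_zero :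
    F 0 0 (0, 0) = (0, 0) ∧
    (∀ x : ℝ × ℝ, (F 0 0)^[5] x = (0, 0)) ∧
    (∀ x y : ℝ, y < 0 → (F 0 0)^[4] (x, y) = (0, 0)) ∧
    (∀ x : ℝ, 0 < x → (F 0 0)^[2] (x, 0) = (0, 0)) ∧
    (∀ x : ℝ, 0 < x → (F 0 0)^[4] (-x, 0) = (0, 0)) := by
  refine ⟨Fzero, fun p => ?_, fun x y hy => lemB x y hy, fun x hx => lemA x 0 le_rfl hx.le,
    fun x hx => ?_⟩
  · obtain ⟨a, b⟩ := p; exact lem5 a b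
  · -- (-x,0) → (x,-x) → (2x,0) → 0 → 0
    have h1 : F 0 0 (-x, 0) = (x, -x) := by
      rw [Fapp, abs_of_neg (neg_neg_iff_pos.mpr hx)]; simp
    have h2 : F 0 0 (x, -x) = (2 * x, 0) := by
      rw [Fapp, abs_of_pos hx, abs_of_neg (neg_neg_iff_pos.mpr hx)]; ring_nf
    have h3 : (F 0 0)^[2] (2 * x, 0) = (0, 0) := lemA _ 0 le_rfl (by linarith)
    show F 0 0 (F 0 0 (F 0 0 (F 0 0 (-x, 0)))) = (0, 0)
    rw [h1, h2]
    exact h3
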